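/- In an elementary doctrine P, condition (ii) is equivalent to requiring that δ_{A×B} = δ_A ⊠ δ_B for every pair of objects A, B of the base category, where α₁ ⊠ α₂ := P_{⟨pr1,pr3⟩}(α₁) ∧ P_{⟨pr2,pr4⟩}(α₂) for α₁ ∈ P(X₁×Y₁), α₂ ∈ P(X₂×Y₂) and pr_i the projections from X₁×X₂×Y₁×Y₂. -/

import Mathlib

open CategoryTheory CategoryTheory.Limits

universe u v w

/-- Layer 0: an indexed family of inf-semilattices over a category. -/
structure DocL0 (C : Type u) [Category.{v} C] where
  obj : C → Type w
  semi : ∀ A : C, SemilatticeInf (obj A)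

attribute [instance] DocL0.semi

/-- Layer 1: fibrewise top elements. -/
structure DocL1 (C : Type u) [Category.{v} C] extends DocL0.{u, v, w} C where
  otop : ∀ A : C, OrderTop (obj A)

attribute [instance] DocL1.otop

/-- A doctrine: an indexed inf-semilattice `P : Cᵒᵖ → InfSL`. -/
structure Doctrine (C : Type u) [Category.{v} C] extends DocL1.{u, v, w} C where
  map : ∀ {A B : C}, (A ⟶ B) → obj B → obj A
  map_id : ∀ (A : C) (x : obj A), map (𝟙 A) x = x
  map_comp : ∀ {A B D : C} (f : A ⟶ B) (g : B ⟶ D) (x : obj D),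
    map (f ≫ g) x = map f (map g x)
  map_mono : ∀ {A B : C} (f : A ⟶ B), Monotone (map f)
  map_inf : ∀ {A B : C} (f : A ⟶ B) (x y : obj B),
    map f (x ⊓ y) = map f x ⊓ map f y
  map_top : ∀ {A B : C} (f : A ⟶ B), map f (⊤ : obj B) = (⊤ : obj A)
/-- The data of an elementary doctrine: an indexed inf-semilattice together
with fibered equalities `δ_A ∈ P(A×A)`; the adjunction conditions (i) and
(ii) are stated separately below. -/
structure ElemData (C : Type u) [Category.{v} C] [HasBinaryProducts C] extends
    Doctrine.{u, v, w} C where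
  delta : ∀ A : C, obj (A ⨯ A)

namespace ElemData

variable {C : Type u} [Category.{v} C] [HasBinaryProducts C]

/-- Condition (i): `α ↦ P_{pr₁}(α) ∧ δ_A` is left adjoint to
`P_{⟨id_A,id_A⟩} : P(A×A) → P(A)`. -/
def CondI (P : ElemData.{u, v, w} C) : Prop :=
  ∀ {A : C} (α : P.obj A) (β : P.obj (A ⨯ A)),
    P.map prod.fst α ⊓ P.delta A ≤ β ↔ α ≤ P.map (diag A) β

/-- Condition (ii): for `e = ⟨pr₁,pr₂,pr₂⟩ : X×A → X×A×A`, the assignment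
`α ↦ P_{⟨pr₁,pr₂⟩}(α) ∧ P_{⟨pr₂,pr₃⟩}(δ_A)` is left adjoint to
`P_e : P(X×A×A) → P(X×A)`. -/
def CondII (P : ElemData.{u, v, w} C) : Prop :=
  ∀ {X A : C} (α : P.obj (X ⨯ A)) (β : P.obj ((X ⨯ A) ⨯ A)),
    P.map prod.fst α ⊓ P.map (prod.lift (prod.fst ≫ prod.snd) prod.snd) (P.delta A) ≤ β ↔
      α ≤ P.map (prod.lift (𝟙 (X ⨯ A)) prod.snd) β

end ElemData

attribute [local simp] prod.lift_fst prod.lift_snd prod.lift_fst_assoc prod.lift_snd_assoc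

section AuxED

open CategoryTheory CategoryTheory.Limits

namespace ElemDataAux

variable {C : Type u} [Category.{v} C] [HasBinaryProducts C] (P : ElemData.{u, v, w} C)

lemma map_map {A B D : C} (f : A ⟶ B) (g : B ⟶ D) (x : P.obj D) :
    P.map f (P.map g x) = P.map (f ≫ g) x := (P.map_comp f g x).symm

lemma map_eq {A B : C} {f g : A ⟶ B} (h : f = g) (x : P.obj B) :
    P.map f x = P.map g x := by rw [h]

lemma diag_delta_top (hI : ElemData.CondI P) (A : C) :
    P.map (diag A) (P.delta A) = ⊤ :=
  le_antisymm le_top ((hI ⊤ (P.delta A)).1 inf_le_right)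

lemma delta_le (hI : ElemData.CondI P) {A : C} {β : P.obj (A ⨯ A)}
    (h : P.map (diag A) β = ⊤) : P.delta A ≤ β := by
  have h2 := (hI ⊤ β).2 (le_of_eq h.symm)
  simpa [P.map_top] using h2

lemma leibniz (hII : ElemData.CondII P) {X A : C} (β : P.obj ((X ⨯ A) ⨯ A)) :
    P.map prod.fst (P.map (prod.lift (𝟙 (X ⨯ A)) prod.snd) β) ⊓
      P.map (prod.lift (prod.fst ≫ prod.snd) prod.snd) (P.delta A) ≤ β :=
  (hII _ β).2 le_rfl

lemma delta_trans (hII : ElemData.CondII P) (Y : C) :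
    P.map prod.fst (P.delta Y) ⊓
      P.map (prod.lift (prod.fst ≫ prod.snd) prod.snd) (P.delta Y) ≤
      P.map (prod.lift (prod.fst ≫ prod.fst) prod.snd) (P.delta Y) := by
  have h := leibniz P hII (X := Y) (A := Y)
      (P.map (prod.lift (prod.fst ≫ prod.fst) prod.snd) (P.delta Y))
  rwa [map_map, map_map,
    map_eq P (show (prod.fst ≫ prod.lift (𝟙 (Y ⨯ Y)) prod.snd) ≫
        prod.lift (prod.fst ≫ prod.fst) prod.snd = (prod.fst : (Y ⨯ Y) ⨯ Y ⟶ Y ⨯ Y) by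
      (repeat' apply Limits.prod.hom_ext) <;> simp)] at h

/-- `(((a,b),a₁),a₂) ↦ ((a₁,b),(a₂,b))` -/
noncomputable def n1 (A B : C) : ((A ⨯ B) ⨯ A) ⨯ A ⟶ (A ⨯ B) ⨯ (A ⨯ B) :=
  prod.lift (prod.lift (prod.fst ≫ prod.snd) (prod.fst ≫ prod.fst ≫ prod.snd))
    (prod.lift prod.snd (prod.fst ≫ prod.fst ≫ prod.snd))

/-- `(((a,b),b₁),b₂) ↦ ((a,b₁),(a,b₂))` -/
noncomputable def n2 (A B : C) : ((A ⨯ B) ⨯ B) ⨯ B ⟶ (A ⨯ B) ⨯ (A ⨯ B) :=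
  prod.lift (prod.lift (prod.fst ≫ prod.fst ≫ prod.fst) (prod.fst ≫ prod.snd))
    (prod.lift (prod.fst ≫ prod.fst ≫ prod.fst) prod.snd)

/-- `((a,b),(a',b')) ↦ (((a,b),a),a')` -/
noncomputable def u1 (A B : C) : (A ⨯ B) ⨯ (A ⨯ B) ⟶ ((A ⨯ B) ⨯ A) ⨯ A :=
  prod.lift (prod.lift prod.fst (prod.fst ≫ prod.fst)) (prod.snd ≫ prod.fst)

/-- `((a,b),(a',b')) ↦ (((a',b),b),b')` -/
noncomputable def u2 (A B : C) : (A ⨯ B) ⨯ (A ⨯ B) ⟶ ((A ⨯ B) ⨯ B) ⨯ B :=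
  prod.lift (prod.lift (prod.lift (prod.snd ≫ prod.fst) (prod.fst ≫ prod.snd))
    (prod.fst ≫ prod.snd)) (prod.snd ≫ prod.snd)

/-- `((a,b),(a',b')) ↦ (((a,b),(a',b)),(a',b'))` -/
noncomputable def wm (A B : C) :
    (A ⨯ B) ⨯ (A ⨯ B) ⟶ ((A ⨯ B) ⨯ (A ⨯ B)) ⨯ (A ⨯ B) :=
  prod.lift (prod.lift prod.fst (prod.lift (prod.snd ≫ prod.fst) (prod.fst ≫ prod.snd)))
    prod.snd

/-- `P_{⟨id,snd⟩} : P((X×A)×A) → P(X×A)` composed with weakening along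
`⟨fst, snd≫snd⟩ : (X×A)×(X×A) → (X×A)×A`. -/
noncomputable def fm (X A : C) : (X ⨯ A) ⨯ (X ⨯ A) ⟶ (X ⨯ A) ⨯ A :=
  prod.lift prod.fst (prod.snd ≫ prod.snd)

/-- `((x,a),a') ↦ ((x,a),(x,a'))` -/
noncomputable def gm (X A : C) : (X ⨯ A) ⨯ A ⟶ (X ⨯ A) ⨯ (X ⨯ A) :=
  prod.lift prod.fst (prod.lift (prod.fst ≫ prod.fst) prod.snd)

lemma C1 (hI : ElemData.CondI P) (hII : ElemData.CondII P) (A B : C) :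
    P.map (prod.lift (prod.fst ≫ prod.snd) prod.snd) (P.delta A) ≤
      P.map (n1 A B) (P.delta (A ⨯ B)) := by
  have h := (hII (X := A ⨯ B) (A := A) ⊤ (P.map (n1 A B) (P.delta (A ⨯ B)))).2 ?_
  · simpa [P.map_top] using h
  · rw [map_map,
      map_eq P (show prod.lift (𝟙 ((A ⨯ B) ⨯ A)) prod.snd ≫ n1 A B =
          prod.lift prod.snd (prod.fst ≫ prod.snd) ≫ diag (A ⨯ B) by
        (repeat' apply Limits.prod.hom_ext) <;> simp [n1]),
      ← map_map, diag_delta_top P hI, P.map_top]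

lemma C2 (hI : ElemData.CondI P) (hII : ElemData.CondII P) (A B : C) :
    P.map (prod.lift (prod.fst ≫ prod.snd) prod.snd) (P.delta B) ≤
      P.map (n2 A B) (P.delta (A ⨯ B)) := by
  have h := (hII (X := A ⨯ B) (A := B) ⊤ (P.map (n2 A B) (P.delta (A ⨯ B)))).2 ?_
  · simpa [P.map_top] using h
  · rw [map_map,
      map_eq P (show prod.lift (𝟙 ((A ⨯ B) ⨯ B)) prod.snd ≫ n2 A B =
          prod.lift (prod.fst ≫ prod.fst) prod.snd ≫ diag (A ⨯ B) by
        (repeat' apply Limits.prod.hom_ext) <;> simp [n2]),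
      ← map_map, diag_delta_top P hI, P.map_top]

lemma D1 (hI : ElemData.CondI P) (hII : ElemData.CondII P) (A B : C) :
    P.map (prod.lift (prod.fst ≫ prod.fst) (prod.snd ≫ prod.fst)) (P.delta A) ≤
      P.map (u1 A B ≫ n1 A B) (P.delta (A ⨯ B)) := by
  have h := P.map_mono (u1 A B) (C1 P hI hII A B)
  rwa [map_map, map_map,
    map_eq P (show u1 A B ≫ prod.lift (prod.fst ≫ prod.snd) prod.snd =
        prod.lift (prod.fst ≫ prod.fst) (prod.snd ≫ prod.fst) by
      (repeat' apply Limits.prod.hom_ext) <;> simp [u1])] at h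

lemma D2 (hI : ElemData.CondI P) (hII : ElemData.CondII P) (A B : C) :
    P.map (prod.lift (prod.fst ≫ prod.snd) (prod.snd ≫ prod.snd)) (P.delta B) ≤
      P.map (u2 A B ≫ n2 A B) (P.delta (A ⨯ B)) := by
  have h := P.map_mono (u2 A B) (C2 P hI hII A B)
  rwa [map_map, map_map,
    map_eq P (show u2 A B ≫ prod.lift (prod.fst ≫ prod.snd) prod.snd =
        prod.lift (prod.fst ≫ prod.snd) (prod.snd ≫ prod.snd) by
      (repeat' apply Limits.prod.hom_ext) <;> simp [u2])] at h

end ElemDataAux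

end AuxED

/-- given condition (i), condition (ii) holds iff
`δ_{A×B} = δ_A ⊠ δ_B` for all objects `A`, `B`, where
`α₁ ⊠ α₂ = P_{⟨pr₁,pr₃⟩}(α₁) ∧ P_{⟨pr₂,pr₄⟩}(α₂)`. -/
theorem condII_iff_delta_box
    {C : Type u} [Category.{v} C] [HasBinaryProducts C]
    (P : ElemData.{u, v, w} C) (hI : ElemData.CondI P) :
    ElemData.CondII P ↔
      ∀ A B : C,
        P.delta (A ⨯ B) =
          P.map (prod.lift (prod.fst ≫ prod.fst) (prod.snd ≫ prod.fst)) (P.delta A) ⊓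
            P.map (prod.lift (prod.fst ≫ prod.snd) (prod.snd ≫ prod.snd)) (P.delta B) := by
  open ElemDataAux in
  constructor
  · -- (ii) → product formula
    intro hII A B
    apply le_antisymm
    · apply delta_le P hI
      rw [P.map_inf, map_map, map_map,
        map_eq P (show diag (A ⨯ B) ≫
            prod.lift (prod.fst ≫ prod.fst) (prod.snd ≫ prod.fst) =
            prod.fst ≫ diag A by (repeat' apply Limits.prod.hom_ext) <;> simp),
        map_eq P (show diag (A ⨯ B) ≫
            prod.lift (prod.fst ≫ prod.snd) (prod.snd ≫ prod.snd) =
            prod.snd ≫ diag B by (repeat' apply Limits.prod.hom_ext) <;> simp),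
        ← map_map, ← map_map, diag_delta_top P hI, diag_delta_top P hI,
        P.map_top, P.map_top, inf_top_eq]
    · have htr := P.map_mono (wm A B) (delta_trans P hII (A ⨯ B))
      rw [P.map_inf, map_map, map_map, map_map,
        map_eq P (show wm A B ≫ prod.fst = u1 A B ≫ n1 A B by
          (repeat' apply Limits.prod.hom_ext) <;> simp [wm, u1, n1]),
        map_eq P (show wm A B ≫ prod.lift (prod.fst ≫ prod.snd) prod.snd =
            u2 A B ≫ n2 A B by
          (repeat' apply Limits.prod.hom_ext) <;> simp [wm, u2, n2]),
        map_eq P (show wm A B ≫ prod.lift (prod.fst ≫ prod.fst) prod.snd =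
            𝟙 ((A ⨯ B) ⨯ (A ⨯ B)) by
          (repeat' apply Limits.prod.hom_ext) <;> simp [wm]),
        P.map_id] at htr
      exact le_trans (inf_le_inf (D1 P hI hII A B) (D2 P hI hII A B)) htr
  · -- product formula → (ii)
    intro hbox X A α β
    constructor
    · intro h
      have h2 := P.map_mono (fm X A) h
      rw [P.map_inf, map_map, map_map,
        map_eq P (show fm X A ≫ prod.fst = (prod.fst : (X ⨯ A) ⨯ (X ⨯ A) ⟶ X ⨯ A) by
          simp [fm]),
        map_eq P (show fm X A ≫ prod.lift (prod.fst ≫ prod.snd) prod.snd =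
            prod.lift (prod.fst ≫ prod.snd) (prod.snd ≫ prod.snd) by
          (repeat' apply Limits.prod.hom_ext) <;> simp [fm])] at h2
      have key : P.map prod.fst α ⊓ P.delta (X ⨯ A) ≤ P.map (fm X A) β := by
        refine le_trans ?_ h2
        rw [hbox X A]
        exact inf_le_inf le_rfl inf_le_right
      have h3 := (hI α (P.map (fm X A) β)).1 key
      rwa [map_map,
        map_eq P (show diag (X ⨯ A) ≫ fm X A = prod.lift (𝟙 (X ⨯ A)) prod.snd by
          (repeat' apply Limits.prod.hom_ext) <;> simp [fm])] at h3
    · intro h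
      have h1 : α ≤ P.map (diag (X ⨯ A)) (P.map (fm X A) β) := by
        rwa [map_map,
          map_eq P (show diag (X ⨯ A) ≫ fm X A = prod.lift (𝟙 (X ⨯ A)) prod.snd by
            (repeat' apply Limits.prod.hom_ext) <;> simp [fm])]
      have h3 := P.map_mono (gm X A) ((hI α (P.map (fm X A) β)).2 h1)
      rw [hbox X A, P.map_inf, P.map_inf, map_map, map_map, map_map, map_map,
        map_eq P (show gm X A ≫ prod.fst = (prod.fst : (X ⨯ A) ⨯ A ⟶ X ⨯ A) by
          simp [gm]),
        map_eq P (show gm X A ≫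
            prod.lift (prod.fst ≫ prod.fst) (prod.snd ≫ prod.fst) =
            (prod.fst ≫ prod.fst) ≫ diag X by
          (repeat' apply Limits.prod.hom_ext) <;> simp [gm]),
        map_eq P (show gm X A ≫
            prod.lift (prod.fst ≫ prod.snd) (prod.snd ≫ prod.snd) =
            prod.lift (prod.fst ≫ prod.snd) prod.snd by
          (repeat' apply Limits.prod.hom_ext) <;> simp [gm]),
        map_eq P (show gm X A ≫ fm X A = 𝟙 ((X ⨯ A) ⨯ A) by
          (repeat' apply Limits.prod.hom_ext) <;> simp [gm, fm]),
        ← map_map, diag_delta_top P hI, P.map_top, P.map_id] at h3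
      simpa using h3
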